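/- Suppose k ≥ 2 and n, m, l ≥ 1 satisfy F_n^{(k)} = F_m^{(k)}·10^d + F_l^{(k)}, where d is the number of decimal digits of F_l^{(k)} ≥ 1 and F_m^{(k)} ≥ 1. Then m + l - 3 < n < m + l + 6. -/

import Mathlib

def genFib (k : ℕ) : ℕ → ℕ
  | 0 => 0
  | 1 => 1
  | n + 2 => ∑ j ∈ Finset.range k, genFib k (n + 1 - j)

namespace GenFibAux

lemma rec_eq (k n : ℕ) : genFib k (n + 2) = ∑ j ∈ Finset.range k, genFib k (n + 1 - j) := by simp [genFib]

lemma zero (k : ℕ) : genFib k 0 = 0 := by simp [genFib]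
lemma one (k : ℕ) : genFib k 1 = 1 := by simp [genFib]

lemma le_succ (k : ℕ) (hk : 1 ≤ k) (n : ℕ) : genFib k n ≤ genFib k (n+1) := by
  cases n with
  | zero => simp [zero, one]
  | succ n =>
    rw [rec_eq]
    have h0 : (0:ℕ) ∈ Finset.range k := Finset.mem_range.2 hk
    have := Finset.single_le_sum (f := fun j => genFib k (n+1-j)) (fun i _ => Nat.zero_le _) h0
    simpa using this

lemma mono (k : ℕ) (hk : 1 ≤ k) : Monotone (genFib k) :=
  monotone_nat_of_le_succ (le_succ k hk)

lemma add_two (k : ℕ) (hk : 2 ≤ k) (n : ℕ) :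
    genFib k (n+1) + genFib k n ≤ genFib k (n+2) := by
  rw [rec_eq]
  have hsub : ({0,1} : Finset ℕ) ⊆ Finset.range k := by
    intro j hj; fin_cases hj <;> (apply Finset.mem_range.2; omega)
  have h := Finset.sum_le_sum_of_subset (f := fun j => genFib k (n+1-j)) hsub
  rw [Finset.sum_pair (by norm_num : (0:ℕ) ≠ 1)] at h
  simpa using h

lemma two (k : ℕ) (hk : 1 ≤ k) : genFib k 2 = 1 := by
  have h : genFib k 2 = ∑ j ∈ Finset.range k, genFib k (1 - j) := rec_eq k 0
  rw [h, Finset.sum_eq_single 0]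
  · exact one k
  · intro j _ hj
    have hz : 1 - j = 0 := by omega
    rw [hz]; exact zero k
  · intro h; exact absurd (Finset.mem_range.2 hk) h

lemma three (k : ℕ) (hk : 2 ≤ k) : genFib k 3 = 2 := by
  have hsub : ({0,1} : Finset ℕ) ⊆ Finset.range k := by
    intro j hj; fin_cases hj <;> (apply Finset.mem_range.2; omega)
  have h := Finset.sum_subset hsub (f := fun j => genFib k (2-j)) ?_
  · have h3 : genFib k 3 = ∑ j ∈ Finset.range k, genFib k (2 - j) := rec_eq k 1
    rw [h3, ← h, Finset.sum_pair (by norm_num : (0:ℕ) ≠ 1)]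
    show genFib k 2 + genFib k 1 = 2
    rw [two k (by omega), one]
  · intro j _ hj
    simp only [Finset.mem_insert, Finset.mem_singleton] at hj
    have hz : 2 - j = 0 := by omega
    simp only [hz, zero]


lemma split_one (k : ℕ) (hk : 1 ≤ k) (f : ℕ → ℕ) :
    ∑ j ∈ Finset.range k, f j = f 0 + ∑ j ∈ Finset.range (k-1), f (1+j) := by
  rw [Finset.range_eq_Ico, ← Finset.sum_Ico_consecutive _ (Nat.zero_le 1) (by omega : 1 ≤ k)]
  simp [Finset.sum_Ico_eq_sum_range]

lemma le_two_mul (k : ℕ) (hk : 2 ≤ k) (n : ℕ) : genFib k (n+2) ≤ 2 * genFib k (n+1) := by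
  cases n with
  | zero => rw [two k (by omega), one]; omega
  | succ n =>
    have e1 : genFib k (n+1+2) = genFib k (n+2) + ∑ j ∈ Finset.range (k-1), genFib k (n+1-j) := by
      rw [rec_eq, split_one k (by omega)]
      congr 1
      exact Finset.sum_congr rfl (fun j _ => by congr 1; omega)
    have e2 : (∑ j ∈ Finset.range (k-1), genFib k (n+1-j)) ≤ genFib k (n+2) := by
      rw [rec_eq]
      exact Finset.sum_le_sum_of_subset (Finset.range_subset_range.2 (by omega))
    have e3 : n+1+2 = n+3 := by omega
    have e4 : n+1+1 = n+2 := by omega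
    rw [e3, e4] at e1 ⊢
    omega

lemma junk (k : ℕ) (hk : 2 ≤ k) : ∀ t x, (∑ i ∈ Finset.range t, genFib k (x - 1 - i)) ≤ genFib k (x+1) := by
  intro t
  induction t with
  | zero => intro x; simp
  | succ t ih =>
    intro x
    rw [Finset.sum_range_succ']
    cases x with
    | zero =>
      have hz : ∀ i : ℕ, (0:ℕ) - 1 - i = 0 := by intro i; omega
      simp [hz, zero, one]
    | succ x =>
      have e : ∀ i ∈ Finset.range t, genFib k (x + 1 - 1 - (i+1)) = genFib k (x-1-i) :=
        fun i _ => by congr 1; omega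
      rw [Finset.sum_congr rfl e]
      have h2 := ih x
      have h3 := add_two k hk x
      have h4 : x + 1 - 1 - 0 = x := by omega
      have h5 : x + 1 + 1 = x + 2 := by omega
      rw [h4, h5]
      omega

lemma supermult (k : ℕ) (hk : 2 ≤ k) : ∀ c a, 1 ≤ a → genFib k a * genFib k (c+1) ≤ genFib k (a+c) := by
  intro c
  induction c using Nat.strong_induction_on with
  | _ c ih =>
    match c with
    | 0 => intro a ha; simp [one]
    | 1 => intro a ha; rw [two k (by omega), Nat.mul_one]; exact le_succ k (by omega) a
    | (c+2) =>
      intro a ha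
      have e1 : genFib k (a + (c+2)) = ∑ j ∈ Finset.range k, genFib k (a+c+1-j) := by
        rw [show a + (c+2) = (a+c)+2 by omega]
        exact rec_eq k (a+c)
      have e2 : genFib k (c+2+1) = ∑ j ∈ Finset.range k, genFib k (c+2-j) := rec_eq k (c+1)
      rw [e1, e2, Finset.mul_sum]
      apply Finset.sum_le_sum
      intro j _
      by_cases hjc : j ≤ c+1
      · have h1 : c+2-j = (c+1-j)+1 := by omega
        have h2 : a+c+1-j = a+(c+1-j) := by omega
        rw [h1, h2]
        exact ih (c+1-j) (by omega) a ha
      · have hz : c+2-j = 0 := by omega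
        rw [hz, zero, Nat.mul_zero]
        exact Nat.zero_le _


lemma split_two (k : ℕ) (hk : 2 ≤ k) (f : ℕ → ℕ) :
    ∑ j ∈ Finset.range k, f j = f 0 + f 1 + ∑ j ∈ Finset.range (k-2), f (2+j) := by
  rw [split_one k (by omega) f, split_one (k-1) (by omega) (fun j => f (1+j))]
  have e0 : k-1-1 = k-2 := by omega
  rw [e0]
  rw [Finset.sum_congr rfl
    (fun j (_ : j ∈ Finset.range (k-2)) => (by congr 1; omega : f (1+(1+j)) = f (2+j)))]
  simp only [Nat.add_zero]
  omega

lemma ico_bound (k : ℕ) (hk : 2 ≤ k) (x z : ℕ)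
    (hw : ∀ y' ≤ z - 1, ∀ x', genFib k (x'+y') ≤ genFib k (x'+2) * genFib k (y'+1))
    (hz : 2 ≤ z) (t : ℕ) :
    ∑ i ∈ Finset.range t, genFib k (x+z-1-i) ≤
    (∑ i ∈ Finset.range t, genFib k (x+2) * genFib k (z-i)) + genFib k (x+1) := by
  have hterm : ∀ i, i ≤ z - 1 → genFib k (x+z-1-i) ≤ genFib k (x+2) * genFib k (z-i) := by
    intro i hi
    have h1 : x+z-1-i = x+(z-1-i) := by omega
    have h2 : z-i = (z-1-i)+1 := by omega
    rw [h1, h2]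
    exact hw (z-1-i) (by omega) x
  rcases le_or_gt t z with ht | ht
  · refine le_trans (Finset.sum_le_sum ?_) (Nat.le_add_right _ _)
    intro i hi
    exact hterm i (by have := Finset.mem_range.1 hi; omega)
  · have hsplit : ∑ i ∈ Finset.range t, genFib k (x+z-1-i) =
        (∑ i ∈ Finset.range z, genFib k (x+z-1-i)) +
        ∑ i ∈ Finset.Ico z t, genFib k (x+z-1-i) := by
      rw [Finset.range_eq_Ico, ← Finset.sum_Ico_consecutive _ (Nat.zero_le z) (le_of_lt ht), ← Finset.range_eq_Ico]
    have h1 : (∑ i ∈ Finset.range z, genFib k (x+z-1-i)) ≤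
        ∑ i ∈ Finset.range z, genFib k (x+2) * genFib k (z-i) :=
      Finset.sum_le_sum (fun i hi => hterm i (by have := Finset.mem_range.1 hi; omega))
    have h2 : (∑ i ∈ Finset.Ico z t, genFib k (x+z-1-i)) ≤ genFib k (x+1) := by
      rw [Finset.sum_Ico_eq_sum_range]
      have e : ∀ i ∈ Finset.range (t-z), genFib k (x+z-1-(z+i)) = genFib k (x-1-i) :=
        fun i _ => by congr 1; omega
      rw [Finset.sum_congr rfl e]
      exact junk k hk (t-z) x
    have h3 : (∑ i ∈ Finset.range z, genFib k (x+2) * genFib k (z-i)) ≤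
        ∑ i ∈ Finset.range t, genFib k (x+2) * genFib k (z-i) :=
      Finset.sum_le_sum_of_subset (Finset.range_subset_range.2 (le_of_lt ht))
    omega

lemma submult_strong (k : ℕ) (hk : 2 ≤ k) :
    ∀ y, 2 ≤ y → ∀ x, genFib k (x+y) + genFib k (x+1) ≤ genFib k (x+2) * genFib k (y+1) := by
  intro y
  induction y using Nat.strong_induction_on with
  | _ y ih =>
    have weak : ∀ y' < y, ∀ x, genFib k (x+y') ≤ genFib k (x+2) * genFib k (y'+1) := by
      intro y' hy' x
      match y', hy' with
      | 0, _ => simpa [one] using (le_succ k (by omega) x).trans (le_succ k (by omega) (x+1))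
      | 1, _ => rw [two k (by omega), Nat.mul_one]; exact le_succ k (by omega) (x+1)
      | (y'+2), h => exact le_trans (Nat.le_add_right _ _) (ih (y'+2) h (by omega) x)
    intro hy x
    rcases Nat.lt_or_ge y 4 with h4 | h4
    · interval_cases y
      · -- y = 2
        rw [show (2:ℕ)+1 = 3 from rfl, three k hk]
        have h := le_succ k (by omega) (x+1)
        have e : x+1+1 = x+2 := by omega
        rw [e] at h
        omega
      · -- y = 3
        have hF4 : 3 ≤ genFib k 4 := by
          have h := add_two k hk 2
          rw [show (2:ℕ)+1 = 3 from rfl, show (2:ℕ)+2 = 4 from rfl, three k hk, two k (by omega)] at h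
          omega
        have h1 := le_two_mul k hk (x+1)
        have h2 := le_succ k (by omega) (x+1)
        have e1 : x+1+2 = x+3 := by omega
        have e2 : x+1+1 = x+2 := by omega
        rw [e1, e2] at h1
        rw [e2] at h2
        rw [show (3:ℕ)+1 = 4 from rfl]
        calc genFib k (x+3) + genFib k (x+1) ≤ 2 * genFib k (x+2) + genFib k (x+2) := by omega
          _ = genFib k (x+2) * 3 := by ring
          _ ≤ genFib k (x+2) * genFib k 4 := Nat.mul_le_mul_left _ hF4
    · obtain ⟨z, rfl⟩ : ∃ z, y = z + 2 := ⟨y - 2, by omega⟩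
      have hz : 2 ≤ z := by omega
      have e1 : genFib k (x+(z+2)) = ∑ j ∈ Finset.range k, genFib k (x+z+1-j) := by
        rw [show x + (z+2) = (x+z)+2 by omega]
        exact rec_eq k (x+z)
      have e2 : genFib k (z+2+1) = ∑ j ∈ Finset.range k, genFib k (z+2-j) := rec_eq k (z+1)
      rw [e1, e2, Finset.mul_sum,
        split_two k hk (fun j => genFib k (x+z+1-j)),
        split_two k hk (fun j => genFib k (x+2) * genFib k (z+2-j))]
      have hj0 : genFib k (x+z+1-0) + genFib k (x+1) ≤ genFib k (x+2) * genFib k (z+2-0) := by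
        have h := ih (z+1) (by omega) (by omega) x
        have e : x+(z+1) = x+z+1-0 := by omega
        have e' : z+1+1 = z+2-0 := by omega
        rw [e, e'] at h
        exact h
      have hj1 : genFib k (x+z+1-1) + genFib k (x+1) ≤ genFib k (x+2) * genFib k (z+2-1) := by
        have h := ih z (by omega) hz x
        have e : x+z = x+z+1-1 := by omega
        have e' : z+1 = z+2-1 := by omega
        rw [e, e'] at h
        exact h
      have hico : (∑ j ∈ Finset.range (k-2), genFib k (x+z+1-(2+j))) ≤
          (∑ j ∈ Finset.range (k-2), genFib k (x+2) * genFib k (z+2-(2+j))) + genFib k (x+1) := by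
        have eL : ∀ j ∈ Finset.range (k-2), genFib k (x+z+1-(2+j)) = genFib k (x+z-1-j) :=
          fun j _ => by congr 1; omega
        have eR : ∀ j ∈ Finset.range (k-2), genFib k (x+2) * genFib k (z+2-(2+j)) =
            genFib k (x+2) * genFib k (z-j) := fun j _ => by congr 2; omega
        rw [Finset.sum_congr rfl eL, Finset.sum_congr rfl eR]
        exact ico_bound k hk x z (fun y' hy' x' => weak y' (by omega) x') hz (k-2)
      omega

lemma submult (k : ℕ) (hk : 2 ≤ k) (x y : ℕ) :
    genFib k (x+y) ≤ genFib k (x+2) * genFib k (y+1) := by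
  match y with
  | 0 => simpa [one] using (le_succ k (by omega) x).trans (le_succ k (by omega) (x+1))
  | 1 => rw [two k (by omega), Nat.mul_one]; exact le_succ k (by omega) (x+1)
  | (y+2) => exact le_trans (Nat.le_add_right _ _) (submult_strong k hk (y+2) (by omega) x)

lemma thirteen (k : ℕ) (hk : 2 ≤ k) (l : ℕ) : 13 * genFib k l ≤ genFib k (l+6) := by
  have h0 := le_succ k (by omega) l
  have h1 := add_two k hk l
  have h2 := add_two k hk (l+1)
  have h3 := add_two k hk (l+2)
  have h4 := add_two k hk (l+3)
  have h5 := add_two k hk (l+4)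
  have e1 : l+1+1 = l+2 := by omega
  have e2 : l+1+2 = l+3 := by omega
  have e3 : l+2+1 = l+3 := by omega
  have e4 : l+2+2 = l+4 := by omega
  have e5 : l+3+1 = l+4 := by omega
  have e6 : l+3+2 = l+5 := by omega
  have e7 : l+4+1 = l+5 := by omega
  have e8 : l+4+2 = l+6 := by omega
  rw [e1, e2] at h2
  rw [e3, e4] at h3
  rw [e5, e6] at h4
  rw [e7, e8] at h5
  omega

end GenFibAux

theorem stmt_9 (k n m l d : ℕ) (hk : 2 ≤ k) (hn : 1 ≤ n) (hm : 1 ≤ m) (hl : 1 ≤ l)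
    (hFl : 1 ≤ genFib k l) (hFm : 1 ≤ genFib k m)
    (hd : d = (Nat.digits 10 (genFib k l)).length)
    (heq : genFib k n = genFib k m * 10 ^ d + genFib k l) :
    (m : ℤ) + l - 3 < n ∧ (n : ℤ) < m + l + 6 := by
  have hk1 : 1 ≤ k := by omega
  have hmono := GenFibAux.mono k hk1
  have hFl0 : genFib k l ≠ 0 := by omega
  have hlt : genFib k l < 10 ^ d := by
    rw [hd]; exact Nat.lt_base_pow_length_digits (by norm_num)
  have hle : 10 ^ d ≤ 10 * genFib k l := by
    rw [hd]; exact Nat.base_pow_length_digits_le 10 _ (by norm_num) hFl0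
  have A : m + l < n + 3 := by
    by_contra hA
    push_neg at hA
    have h1 : genFib k n ≤ genFib k (m+l-3) := hmono (by omega)
    have h2 : genFib k (m+l-3) ≤ genFib k m * genFib k l := by
      rcases Nat.lt_or_ge m 2 with hm2 | hm2
      · have hm1 : m = 1 := by omega
        subst hm1
        calc genFib k (1+l-3) ≤ genFib k l := hmono (by omega)
          _ = 1 * genFib k l := (one_mul _).symm
          _ = genFib k 1 * genFib k l := by rw [GenFibAux.one]
      · have h := GenFibAux.submult k hk (m-2) (l-1)
        have e1 : m-2+(l-1) = m+l-3 := by omega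
        have e2 : m-2+2 = m := by omega
        have e3 : l-1+1 = l := by omega
        rw [e1, e2, e3] at h
        exact h
    have h3 : genFib k m * genFib k l < genFib k m * 10^d :=
      mul_lt_mul_of_pos_left hlt (by omega : 0 < genFib k m)
    omega
  have B : n < m + l + 6 := by
    by_contra hB
    push_neg at hB
    have h1 : genFib k (m+l+6) ≤ genFib k n := hmono (by omega)
    have h2 := GenFibAux.supermult k hk (l+5) m hm
    have e1 : l+5+1 = l+6 := by omega
    have e2 : m+(l+5) = m+l+5 := by omega
    rw [e1, e2] at h2
    have h3 : genFib k (m+l+5) ≤ genFib k (m+l+6) := hmono (by omega)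
    have h4 := GenFibAux.thirteen k hk l
    have h5 : genFib k m * (13 * genFib k l) ≤ genFib k m * genFib k (l+6) :=
      Nat.mul_le_mul_left _ h4
    have h6 : genFib k m * 10^d ≤ genFib k m * (10 * genFib k l) :=
      Nat.mul_le_mul_left _ hle
    have h7 : genFib k m * (13 * genFib k l) ≤ genFib k m * (10 * genFib k l) + genFib k l := by
      calc genFib k m * (13 * genFib k l) ≤ genFib k m * genFib k (l+6) := h5
        _ ≤ genFib k (m+l+5) := h2
        _ ≤ genFib k (m+l+6) := h3
        _ ≤ genFib k n := h1
        _ = genFib k m * 10^d + genFib k l := heq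
        _ ≤ genFib k m * (10 * genFib k l) + genFib k l := by omega
    nlinarith [h7, hFm, hFl]
  constructor <;> omega
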